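/- The elements ξ̄_1, ξ̄_2, ξ̄_3, … are algebraically independent over ZMod 2 in the algebra 𝓕₂*: the monomials ξ̄_1^{l_1} ξ̄_2^{l_2} ⋯ ξ̄_n^{l_n}, as (l_1,…,l_n) ranges over all distinct finite sequences of nonnegative integers (with l_n > 0), are linearly independent over ZMod 2. Hence the subalgebra of 𝓕₂* generated by the ξ̄_n is a polynomial algebra ZMod 2[ξ̄_1, ξ̄_2, …]. -/

import Mathlib

/-- The overlapping shuffle product of two finite sequences, as a multiset
(counting multiplicities). -/
def osp : List ℕ → List ℕ → Multiset (List ℕ)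
  | A, [] => {A}
  | [], B => {B}
  | a :: A, b :: B =>
      ((osp A (b :: B)).map (a :: ·)) +
      ((osp (a :: A) B).map (b :: ·)) +
      ((osp A B).map ((a + b) :: ·))
termination_by A B => A.length + B.length
decreasing_by all_goals (simp only [List.length_cons]; omega)

/-- The underlying free module over `ZMod 2` on the set of finite sequences
(this carries the mod 2 dual Leibniz--Hopf algebra `𝓕₂*`). -/
abbrev F2D : Type := (List ℕ) →₀ ZMod 2

/-- The basis element `S_I`. -/
noncomputable def sElem (I : List ℕ) : F2D := Finsupp.single I 1

/-- The element of `𝓕₂*` associated to a multiset of sequences, keeping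
multiplicities mod 2. -/
noncomputable def ofMS (m : Multiset (List ℕ)) : F2D := (m.map sElem).sum

/-- The bilinear product of `𝓕₂*`: on basis elements,
`S_I · S_J = Σ_K (multiplicity of K in osp I J mod 2) • S_K`. -/
noncomputable def fmul (x y : F2D) : F2D :=
  x.sum fun I a => y.sum fun J b => (a * b) • ofMS (osp I J)

/-- Powers in `𝓕₂*` (with `S_{()}` the unit). -/
noncomputable def fpow (x : F2D) : ℕ → F2D
  | 0 => sElem []
  | n + 1 => fmul x (fpow x n)

/-- Product of a list of elements of `𝓕₂*` (with `S_{()}` the unit). -/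
noncomputable def fprod : List F2D → F2D
  | [] => sElem []
  | x :: xs => fmul x (fprod xs)

/-- `ξ̄_n = S_{(2^{n−1}, 2^{n−2}, …, 2, 1)}`. -/
noncomputable def xibar (n : ℕ) : F2D := sElem (((List.range n).map (2 ^ ·)).reverse)

/-- The monomial `ξ̄_1^{l_1} · ξ̄_2^{l_2} ⋯ ξ̄_n^{l_n}` for `L = (l_1,…,l_n)`. -/
noncomputable def xiMonomial (L : List ℕ) : F2D :=
  fprod (L.mapIdx fun i l => fpow (xibar (i + 1)) l)

/-! ### osp basics -/

theorem osp_nil_right (A : List ℕ) : osp A [] = {A} := by cases A <;> simp [osp]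
theorem osp_nil_left (B : List ℕ) : osp [] B = {B} := by cases B <;> simp [osp]
theorem osp_cons_cons (a b : ℕ) (A B : List ℕ) :
    osp (a :: A) (b :: B) =
      ((osp A (b :: B)).map (a :: ·)) +
      ((osp (a :: A) B).map (b :: ·)) +
      ((osp A B).map ((a + b) :: ·)) := by simp [osp]

/-! ### pointwise sums, positivity -/

def addSeq : List ℕ → List ℕ → List ℕ
  | [], B => B
  | A, [] => A
  | a :: A, b :: B => (a + b) :: addSeq A B

theorem addSeq_nil_right (A : List ℕ) : addSeq A [] = A := by cases A <;> rfl
theorem addSeq_nil_left (B : List ℕ) : addSeq [] B = B := by cases B <;> rfl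
theorem addSeq_cons_cons (a b : ℕ) (A B : List ℕ) :
    addSeq (a :: A) (b :: B) = (a + b) :: addSeq A B := rfl

def Pos (K : List ℕ) : Prop := ∀ x ∈ K, 0 < x

theorem Pos_cons {a : ℕ} {A : List ℕ} (ha : 0 < a) (hA : Pos A) : Pos (a :: A) := by
  intro x hx; rcases List.mem_cons.1 hx with h | h; · omega
  · exact hA x h

theorem Pos_of_cons {a : ℕ} {A : List ℕ} (h : Pos (a :: A)) : 0 < a ∧ Pos A :=
  ⟨h a (List.mem_cons_self), fun x hx => h x (List.mem_cons_of_mem _ hx)⟩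

theorem addSeq_pos {A B : List ℕ} (hA : Pos A) (hB : Pos B) : Pos (addSeq A B) := by
  induction A generalizing B with
  | nil => rw [addSeq_nil_left]; exact hB
  | cons a A ih =>
    cases B with
    | nil => rw [addSeq_nil_right]; exact hA
    | cons b B =>
      rw [addSeq_cons_cons]
      obtain ⟨ha, hA'⟩ := Pos_of_cons hA
      obtain ⟨hb, hB'⟩ := Pos_of_cons hB
      exact Pos_cons (by omega) (ih hA' hB')

theorem lt_cons_cons_of_lt {a b : ℕ} (h : a < b) (A B : List ℕ) :
    a :: A < b :: B := List.Lex.rel h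

theorem lt_cons_cons_of_tail {a : ℕ} {A B : List ℕ} (h : A < B) :
    a :: A < a :: B := List.Lex.cons h

theorem le_cons_cons_of_tail {a : ℕ} {A B : List ℕ} (h : A ≤ B) :
    a :: A ≤ a :: B := by
  rcases eq_or_lt_of_le h with h | h
  · exact le_of_eq (by rw [h])
  · exact le_of_lt (lt_cons_cons_of_tail h)

/-! ### main combinatorial facts about osp -/

theorem osp_aux : ∀ n (A B : List ℕ), A.length + B.length ≤ n → Pos A → Pos B →
    (∀ K ∈ osp A B, Pos K ∧ K ≤ addSeq A B) ∧ (osp A B).count (addSeq A B) = 1 := by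
  intro n
  induction n with
  | zero =>
    intro A B hn hA hB
    have : A = [] := by cases A <;> simp_all
    have : B = [] := by cases B <;> simp_all
    subst_vars
    simp [osp_nil_right, addSeq_nil_right, Pos]
  | succ n ih =>
    intro A B hn hA hB
    cases A with
    | nil =>
      rw [osp_nil_left, addSeq_nil_left]
      constructor
      · intro K hK; rw [Multiset.mem_singleton] at hK; subst hK; exact ⟨hB, le_refl _⟩
      · simp
    | cons a A =>
      cases B with
      | nil =>
        rw [osp_nil_right, addSeq_nil_right]
        constructor
        · intro K hK; rw [Multiset.mem_singleton] at hK; subst hK; exact ⟨hA, le_refl _⟩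
        · simp
      | cons b B =>
        obtain ⟨ha, hA'⟩ := Pos_of_cons hA
        obtain ⟨hb, hB'⟩ := Pos_of_cons hB
        simp only [List.length_cons] at hn
        have ih1 := ih A (b :: B) (by simp only [List.length_cons]; omega) hA' hB
        have ih2 := ih (a :: A) B (by simp only [List.length_cons]; omega) hA hB'
        have ih3 := ih A B (by omega) hA' hB'
        rw [osp_cons_cons, addSeq_cons_cons]
        constructor
        · intro K hK
          simp only [Multiset.mem_add, Multiset.mem_map] at hK
          rcases hK with (⟨K', hK', rfl⟩ | ⟨K', hK', rfl⟩) | ⟨K', hK', rfl⟩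
          · obtain ⟨hp, _⟩ := ih1.1 K' hK'
            exact ⟨Pos_cons ha hp, le_of_lt (lt_cons_cons_of_lt (by omega) _ _)⟩
          · obtain ⟨hp, _⟩ := ih2.1 K' hK'
            exact ⟨Pos_cons hb hp, le_of_lt (lt_cons_cons_of_lt (by omega) _ _)⟩
          · obtain ⟨hp, hle⟩ := ih3.1 K' hK'
            exact ⟨Pos_cons (by omega) hp, le_cons_cons_of_tail hle⟩
        · rw [Multiset.count_add, Multiset.count_add]
          have c1 : ((osp A (b :: B)).map (a :: ·)).count ((a + b) :: addSeq A B) = 0 := by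
            rw [Multiset.count_eq_zero]
            intro h
            obtain ⟨K', _, hK'⟩ := Multiset.mem_map.1 h
            have := List.head_eq_of_cons_eq hK'
            omega
          have c2 : ((osp (a :: A) B).map (b :: ·)).count ((a + b) :: addSeq A B) = 0 := by
            rw [Multiset.count_eq_zero]
            intro h
            obtain ⟨K', _, hK'⟩ := Multiset.mem_map.1 h
            have := List.head_eq_of_cons_eq hK'
            omega
          have c3 : ((osp A B).map ((a + b) :: ·)).count ((a + b) :: addSeq A B) = 1 := by
            rw [Multiset.count_map_eq_count' _ _ (fun x y h => List.tail_eq_of_cons_eq h)]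
            exact ih3.2
          omega

theorem osp_mem {A B : List ℕ} (hA : Pos A) (hB : Pos B) :
    ∀ K ∈ osp A B, Pos K ∧ K ≤ addSeq A B := (osp_aux _ A B le_rfl hA hB).1

theorem osp_count {A B : List ℕ} (hA : Pos A) (hB : Pos B) :
    (osp A B).count (addSeq A B) = 1 := (osp_aux _ A B le_rfl hA hB).2

/-! ### associativity of osp -/

theorem osp_assoc_aux : ∀ n, ∀ A B C : List ℕ, A.length + B.length + C.length ≤ n →
    (osp A B).bind (fun K => osp K C) = (osp B C).bind (fun K => osp A K) := by
  intro n
  induction n with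
  | zero =>
    intro A B C h
    have hA : A = [] := by cases A <;> simp_all
    have hB : B = [] := by cases B <;> simp_all
    have hC : C = [] := by cases C <;> simp_all
    subst_vars
    simp [osp_nil_left, Multiset.singleton_bind]
  | succ n ih =>
    intro A B C h
    cases A with
    | nil =>
      rw [osp_nil_left]
      simp only [Multiset.singleton_bind]
      rw [show (fun K => osp ([] : List ℕ) K) = fun K => ({K} : Multiset (List ℕ)) from
        funext fun K => osp_nil_left K]
      rw [Multiset.bind_singleton, Multiset.map_id']
    | cons a A =>
      cases B with
      | nil =>
        rw [osp_nil_right, osp_nil_left]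
        simp only [Multiset.singleton_bind]
      | cons b B =>
        cases C with
        | nil =>
          rw [osp_nil_right]
          simp only [Multiset.singleton_bind]
          rw [show (fun K : List ℕ => osp K ([] : List ℕ)) = fun K => ({K} : Multiset (List ℕ)) from
            funext fun K => osp_nil_right K]
          rw [Multiset.bind_singleton, Multiset.map_id']
        | cons c C =>
          simp only [List.length_cons] at h
          have I1 := ih A (b :: B) (c :: C) (by simp only [List.length_cons]; omega)
          have I2 := ih (a :: A) (b :: B) C (by simp only [List.length_cons]; omega)
          have I3 := ih A (b :: B) C (by simp only [List.length_cons]; omega)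
          have I4 := ih (a :: A) B (c :: C) (by simp only [List.length_cons]; omega)
          have I6 := ih (a :: A) B C (by simp only [List.length_cons]; omega)
          have I7 := ih A B (c :: C) (by simp only [List.length_cons]; omega)
          have I9 := ih A B C (by omega)
          rw [osp_cons_cons a b A B, osp_cons_cons b c B C]
          simp only [Multiset.add_bind, Multiset.bind_map]
          simp only [osp_cons_cons, Multiset.bind_add, ← Multiset.map_bind]
          rw [← I2, I1, I3, I4, I6, I7, I9]
          simp only [osp_cons_cons, Multiset.add_bind, Multiset.bind_map, Multiset.bind_add,
            ← Multiset.map_bind, Multiset.map_add]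
          simp only [add_assoc, Nat.add_assoc]
          abel

theorem osp_assoc (A B C : List ℕ) :
    (osp A B).bind (fun K => osp K C) = (osp B C).bind (fun K => osp A K) :=
  osp_assoc_aux _ A B C le_rfl

/-! ### multiset products of lists of factors -/

def msProd : List (List ℕ) → Multiset (List ℕ)
  | [] => {[]}
  | A :: F => (msProd F).bind (fun K => osp A K)

def sumSeq (F : List (List ℕ)) : List ℕ := F.foldr addSeq []

theorem msProd_append : ∀ F₁ F₂ : List (List ℕ),
    msProd (F₁ ++ F₂) = (msProd F₁).bind fun I => (msProd F₂).bind fun J => osp I J := by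
  intro F₁
  induction F₁ with
  | nil =>
    intro F₂
    rw [List.nil_append, show msProd [] = {([] : List ℕ)} from rfl, Multiset.singleton_bind]
    rw [show (fun J => osp ([] : List ℕ) J) = fun J : List ℕ => ({J} : Multiset (List ℕ)) from
      funext osp_nil_left]
    rw [Multiset.bind_singleton, Multiset.map_id']
  | cons A F ih =>
    intro F₂
    rw [List.cons_append,
      show msProd (A :: (F ++ F₂)) = (msProd (F ++ F₂)).bind (fun K => osp A K) from rfl, ih,
      show msProd (A :: F) = (msProd F).bind (fun K => osp A K) from rfl]
    simp only [Multiset.bind_assoc]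
    refine congrArg _ (funext fun I => ?_)
    rw [Multiset.bind_bind]
    refine congrArg _ (funext fun J => ?_)
    exact (osp_assoc A I J).symm

theorem addSeq_lt_addSeq : ∀ (A : List ℕ) {K S : List ℕ}, Pos S → K < S →
    addSeq A K < addSeq A S := by
  intro A
  induction A with
  | nil => intro K S _ h; rwa [addSeq_nil_left, addSeq_nil_left]
  | cons a A ih =>
    intro K S hS h
    cases K with
    | nil =>
      cases S with
      | nil => exact absurd h (lt_irrefl _)
      | cons s S =>
        rw [addSeq_nil_right, addSeq_cons_cons]
        exact List.Lex.rel (by have := (Pos_of_cons hS).1; omega)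
    | cons k K =>
      cases S with
      | nil => exact absurd (h : List.Lex (· < ·) (k :: K) []) (by intro hh; cases hh)
      | cons s S =>
        rw [addSeq_cons_cons, addSeq_cons_cons]
        replace h : List.Lex (· < ·) (k :: K) (s :: S) := h
        obtain ⟨hs, hS'⟩ := Pos_of_cons hS
        cases h with
        | rel h => exact List.Lex.rel (by omega)
        | cons h => exact List.Lex.cons (ih hS' h)

theorem addSeq_le_addSeq (A : List ℕ) {K S : List ℕ} (hS : Pos S) (h : K ≤ S) :
    addSeq A K ≤ addSeq A S := by
  rcases eq_or_lt_of_le h with h | h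
  · exact le_of_eq (by rw [h])
  · exact le_of_lt (addSeq_lt_addSeq A hS h)

theorem sumSeq_pos : ∀ {F : List (List ℕ)}, (∀ A ∈ F, Pos A) → Pos (sumSeq F) := by
  intro F
  induction F with
  | nil => intro _ x hx; simp [sumSeq] at hx
  | cons A F ih =>
    intro h
    rw [show sumSeq (A :: F) = addSeq A (sumSeq F) from rfl]
    exact addSeq_pos (h A (by simp)) (ih fun B hB => h B (by simp [hB]))

theorem msProd_mem : ∀ {F : List (List ℕ)}, (∀ A ∈ F, Pos A) →
    ∀ K ∈ msProd F, Pos K ∧ K ≤ sumSeq F := by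
  intro F
  induction F with
  | nil =>
    intro _ K hK
    rw [show msProd [] = {([] : List ℕ)} from rfl, Multiset.mem_singleton] at hK
    subst hK
    exact ⟨fun x hx => by simp at hx, le_refl _⟩
  | cons A F ih =>
    intro h K hK
    rw [show msProd (A :: F) = (msProd F).bind (fun K => osp A K) from rfl,
      Multiset.mem_bind] at hK
    obtain ⟨K₁, hK₁, hK⟩ := hK
    have hA : Pos A := h A (by simp)
    have hF : ∀ B ∈ F, Pos B := fun B hB => h B (by simp [hB])
    obtain ⟨hp₁, hle₁⟩ := ih hF K₁ hK₁
    obtain ⟨hp, hle⟩ := osp_mem hA hp₁ K hK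
    exact ⟨hp, le_trans hle (addSeq_le_addSeq A (sumSeq_pos hF) hle₁)⟩

theorem count_eq_sum_map {s : List ℕ} : ∀ m : Multiset (List ℕ),
    (m.map fun K => if K = s then 1 else 0).sum = m.count s := by
  intro m
  induction m using Multiset.induction with
  | empty => simp
  | cons a m ih =>
    rw [Multiset.map_cons, Multiset.sum_cons, ih, Multiset.count_cons]
    by_cases h : a = s
    · subst h; simp; omega
    · rw [if_neg h, if_neg (fun hh : s = a => h hh.symm)]; omega

theorem msProd_count : ∀ {F : List (List ℕ)}, (∀ A ∈ F, Pos A) →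
    (msProd F).count (sumSeq F) = 1 := by
  intro F
  induction F with
  | nil => intro _; simp [msProd, sumSeq]
  | cons A F ih =>
    intro h
    have hA : Pos A := h A (by simp)
    have hF : ∀ B ∈ F, Pos B := fun B hB => h B (by simp [hB])
    rw [show msProd (A :: F) = (msProd F).bind (fun K => osp A K) from rfl,
      show sumSeq (A :: F) = addSeq A (sumSeq F) from rfl, Multiset.count_bind]
    have key : ∀ K₁ ∈ msProd F,
        (fun K₁ => (osp A K₁).count (addSeq A (sumSeq F))) K₁ =
        (fun K₁ => if K₁ = sumSeq F then 1 else 0) K₁ := by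
      intro K₁ hK₁
      dsimp only
      by_cases hk : K₁ = sumSeq F
      · subst hk; rw [if_pos rfl]; exact osp_count hA ((msProd_mem hF _ hK₁).1)
      · rw [if_neg hk, Multiset.count_eq_zero]
        intro hmem
        obtain ⟨hp₁, hle₁⟩ := msProd_mem hF K₁ hK₁
        have hlt : K₁ < sumSeq F := lt_of_le_of_ne hle₁ hk
        have h1 := (osp_mem hA hp₁ _ hmem).2
        have h2 := addSeq_lt_addSeq A (sumSeq_pos hF) hlt
        exact absurd (lt_of_le_of_lt h1 h2) (lt_irrefl _)
    rw [Multiset.map_congr rfl key, count_eq_sum_map, ih hF]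

/-! ### algebra layer -/

theorem ofMS_zero : ofMS 0 = 0 := rfl

theorem ofMS_cons (a : List ℕ) (m : Multiset (List ℕ)) :
    ofMS (a ::ₘ m) = sElem a + ofMS m := by
  rw [ofMS, Multiset.map_cons, Multiset.sum_cons]; rfl

theorem ofMS_add (m n : Multiset (List ℕ)) : ofMS (m + n) = ofMS m + ofMS n := by
  rw [ofMS, Multiset.map_add, Multiset.sum_add]; rfl

theorem ofMS_singleton (a : List ℕ) : ofMS {a} = sElem a := by
  rw [ofMS]; simp

theorem ofMS_apply (m : Multiset (List ℕ)) (K : List ℕ) :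
    ofMS m K = ((m.count K : ℕ) : ZMod 2) := by
  induction m using Multiset.induction with
  | empty => simp [ofMS]
  | cons a m ih =>
    rw [ofMS_cons, Finsupp.add_apply, ih, Multiset.count_cons, sElem, Finsupp.single_apply]
    push_cast
    by_cases h : a = K
    · subst h; simp [add_comm]
    · rw [if_neg h, if_neg (fun hh : K = a => h hh.symm)]; ring

theorem fmul_sElem (A : List ℕ) (y : F2D) :
    fmul (sElem A) y = y.sum fun J b => b • ofMS (osp A J) := by
  rw [fmul, sElem, Finsupp.sum_single_index]
  · simp only [one_mul]
  · simp only [zero_mul, zero_smul, Finsupp.sum, Finset.sum_const_zero]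

theorem fmul_sElem_ofMS (A : List ℕ) (m : Multiset (List ℕ)) :
    fmul (sElem A) (ofMS m) = ofMS (m.bind fun J => osp A J) := by
  rw [fmul_sElem]
  induction m using Multiset.induction with
  | empty =>
    rw [ofMS_zero, Multiset.zero_bind, ofMS_zero, Finsupp.sum_zero_index]
  | cons a m ih =>
    rw [ofMS_cons, Finsupp.sum_add_index' (fun J => by simp) (fun J b₁ b₂ => by rw [add_smul]),
      sElem, Finsupp.sum_single_index (by simp), ih, Multiset.cons_bind, ofMS_add, one_smul]

theorem fmul_add_left (x x' y : F2D) : fmul (x + x') y = fmul x y + fmul x' y := by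
  rw [fmul, fmul, fmul]
  apply Finsupp.sum_add_index'
  · intro I; simp only [zero_mul, zero_smul, Finsupp.sum, Finset.sum_const_zero]
  · intro I b₁ b₂; simp only [add_mul, add_smul, Finsupp.sum_add]

theorem fmul_zero_left (y : F2D) : fmul 0 y = 0 := Finsupp.sum_zero_index

theorem fmul_ofMS_ofMS (m m' : Multiset (List ℕ)) :
    fmul (ofMS m) (ofMS m') = ofMS (m.bind fun I => m'.bind fun J => osp I J) := by
  induction m using Multiset.induction with
  | empty => rw [ofMS_zero, fmul_zero_left, Multiset.zero_bind, ofMS_zero]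
  | cons a m ih =>
    rw [ofMS_cons, fmul_add_left, fmul_sElem_ofMS, ih, Multiset.cons_bind, ofMS_add]

def xw (k : ℕ) : List ℕ := ((List.range k).map (2 ^ ·)).reverse

theorem xibar_eq (n : ℕ) : xibar n = sElem (xw n) := rfl

theorem fpow_xibar (k l : ℕ) :
    fpow (xibar k) l = ofMS (msProd (List.replicate l (xw k))) := by
  induction l with
  | zero =>
    rw [List.replicate_zero, show msProd [] = {([] : List ℕ)} from rfl, ofMS_singleton]
    rfl
  | succ l ih =>
    rw [show fpow (xibar k) (l + 1) = fmul (xibar k) (fpow (xibar k) l) from rfl, ih,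
      xibar_eq, fmul_sElem_ofMS, List.replicate_succ]
    rfl

theorem fprod_ofMS : ∀ Fs : List (List (List ℕ)),
    fprod (Fs.map fun F => ofMS (msProd F)) = ofMS (msProd Fs.flatten) := by
  intro Fs
  induction Fs with
  | nil => exact (ofMS_singleton _).symm
  | cons F Fs ih =>
    rw [List.map_cons,
      show fprod (ofMS (msProd F) :: (Fs.map fun F => ofMS (msProd F))) =
        fmul (ofMS (msProd F)) (fprod (Fs.map fun F => ofMS (msProd F))) from rfl,
      ih, fmul_ofMS_ofMS, ← msProd_append, List.flatten_cons]

def Gfac (d : ℕ) (L : List ℕ) : List (List ℕ) :=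
  (L.mapIdx fun i l => List.replicate l (xw (i + 1 + d))).flatten

theorem Gfac_nil (d : ℕ) : Gfac d [] = [] := rfl

theorem Gfac_cons (d l : ℕ) (L : List ℕ) :
    Gfac d (l :: L) = List.replicate l (xw (1 + d)) ++ Gfac (d + 1) L := by
  rw [Gfac, List.mapIdx_cons, List.flatten_cons]
  have h1 : (0:ℕ) + 1 + d = 1 + d := by omega
  rw [h1]
  congr 1
  rw [Gfac]
  congr 1
  have h2 : ∀ i : ℕ, i + 1 + 1 + d = i + 1 + (d + 1) := by omega
  simp only [h2]

theorem xiMonomial_aux : ∀ (L : List ℕ) (d : ℕ),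
    fprod (L.mapIdx fun i l => fpow (xibar (i + 1 + d)) l) = ofMS (msProd (Gfac d L)) := by
  intro L
  induction L with
  | nil => intro d; exact (ofMS_singleton _).symm
  | cons l L ih =>
    intro d
    rw [List.mapIdx_cons]
    have h2 : ∀ i : ℕ, i + 1 + 1 + d = i + 1 + (d + 1) := by omega
    have h1 : (0:ℕ) + 1 + d = 1 + d := by omega
    rw [show fprod ((fpow (xibar (0 + 1 + d)) l) ::
        (L.mapIdx fun i l' => fpow (xibar (i + 1 + 1 + d)) l')) =
      fmul (fpow (xibar (0 + 1 + d)) l)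
        (fprod (L.mapIdx fun i l' => fpow (xibar (i + 1 + 1 + d)) l')) from rfl]
    simp only [h1, h2]
    rw [ih (d + 1), fpow_xibar, fmul_ofMS_ofMS, ← msProd_append, Gfac_cons]

theorem xiMonomial_eq (L : List ℕ) : xiMonomial L = ofMS (msProd (Gfac 0 L)) := by
  have h := xiMonomial_aux L 0
  rw [xiMonomial]
  have h0 : ∀ i : ℕ, i + 1 + 0 = i + 1 := by omega
  simp only [h0] at h
  exact h

theorem xw_pos (k : ℕ) : Pos (xw k) := by
  intro x hx
  rw [xw, List.mem_reverse, List.mem_map] at hx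
  obtain ⟨t, _, rfl⟩ := hx
  exact pow_pos (by norm_num) t

theorem Gfac_pos : ∀ (L : List ℕ) (d : ℕ), ∀ A ∈ Gfac d L, Pos A := by
  intro L
  induction L with
  | nil => intro d A hA; rw [Gfac_nil] at hA; simp at hA
  | cons l L ih =>
    intro d A hA
    rw [Gfac_cons, List.mem_append] at hA
    rcases hA with hA | hA
    · rw [List.eq_of_mem_replicate hA]; exact xw_pos _
    · exact ih (d + 1) A hA

/-! ### the leading sequence -/

def Efun : List ℕ → List ℕ
  | [] => []
  | l :: L => (l + 2 * (Efun L).headD 0) :: Efun L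

theorem Efun_cons (l : ℕ) (L : List ℕ) :
    Efun (l :: L) = (l + 2 * (Efun L).headD 0) :: Efun L := rfl

theorem Efun_inj : ∀ L₁ L₂ : List ℕ, Efun L₁ = Efun L₂ → L₁ = L₂ := by
  intro L₁
  induction L₁ with
  | nil =>
    intro L₂ h
    cases L₂ with
    | nil => rfl
    | cons l L => exact absurd h (by rw [Efun_cons]; exact fun hh => List.cons_ne_nil _ _ hh.symm)
  | cons l L ih =>
    intro L₂ h
    cases L₂ with
    | nil => exact absurd h (by rw [Efun_cons]; exact fun hh => List.cons_ne_nil _ _ hh)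
    | cons l' L' =>
      rw [Efun_cons, Efun_cons] at h
      have h1 := List.head_eq_of_cons_eq h
      have h2 := List.tail_eq_of_cons_eq h
      have hL := ih L' h2
      subst hL
      have : l = l' := by omega
      rw [this]

theorem addSeq_map_succ (c : ℕ) : ∀ (A S : List ℕ),
    addSeq A (addSeq (A.map fun x => c * x) S) = addSeq (A.map fun x => (c + 1) * x) S := by
  intro A
  induction A with
  | nil => intro S; rw [List.map_nil, addSeq_nil_left, List.map_nil, addSeq_nil_left]
  | cons a A ih =>
    intro S
    rw [List.map_cons, List.map_cons]
    cases S with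
    | nil =>
      rw [addSeq_nil_right, addSeq_cons_cons, addSeq_nil_right]
      have h2 := ih []
      rw [addSeq_nil_right, addSeq_nil_right] at h2
      rw [h2, show a + c * a = (c + 1) * a by ring]
    | cons s S =>
      rw [addSeq_cons_cons, addSeq_cons_cons, addSeq_cons_cons, ih S,
        show a + (c * a + s) = (c + 1) * a + s by ring]

theorem foldr_addSeq_replicate (A S : List ℕ) : ∀ l : ℕ,
    List.foldr addSeq S (List.replicate (l + 1) A) = addSeq (A.map fun x => (l + 1) * x) S := by
  intro l
  induction l with
  | zero =>
    rw [List.replicate_succ, List.replicate_zero, List.foldr_cons, List.foldr_nil]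
    have : A.map (fun x => (0 + 1) * x) = A := by simp
    rw [this]
  | succ l ih =>
    rw [List.replicate_succ, List.foldr_cons, ih, addSeq_map_succ]

theorem sumSeq_append (X Y : List (List ℕ)) :
    sumSeq (X ++ Y) = List.foldr addSeq (sumSeq Y) X := by
  rw [sumSeq, sumSeq, List.foldr_append]

theorem zip_rev_maps (f g : ℕ → ℕ) : ∀ n : ℕ,
    List.zipWith (· + ·) (((List.range n).map f).reverse) (((List.range n).map g).reverse)
      = ((List.range n).map fun t => f t + g t).reverse := by
  intro n
  induction n with
  | zero => rfl
  | succ n ih =>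
    rw [List.range_succ]
    simp only [List.map_append, List.reverse_append, List.map_cons, List.map_nil,
      List.reverse_cons, List.reverse_nil, List.nil_append, List.cons_append,
      List.singleton_append, List.zipWith_cons_cons]
    rw [ih]

theorem addSeq_append : ∀ (X Y Z : List ℕ), X.length = Y.length →
    addSeq X (Y ++ Z) = List.zipWith (· + ·) X Y ++ Z := by
  intro X
  induction X with
  | nil =>
    intro Y Z h
    cases Y with
    | nil => rw [addSeq_nil_left]; rfl
    | cons y Y => simp at h
  | cons x X ih =>
    intro Y Z h
    cases Y with
    | nil => simp at h
    | cons y Y =>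
      rw [List.cons_append, addSeq_cons_cons, ih Y Z (by simpa using h),
        List.zipWith_cons_cons, List.cons_append]

theorem rev_range_succ (f : ℕ → ℕ) (d : ℕ) :
    ((List.range (d + 1)).map f).reverse
      = ((List.range d).map fun t => f (t + 1)).reverse ++ [f 0] := by
  rw [List.range_succ_eq_map, List.map_cons, List.reverse_cons, List.map_map]
  rfl

theorem sumSeq_Gfac : ∀ (L : List ℕ), L ≠ [] → L.getLast? ≠ some 0 → ∀ d : ℕ,
    sumSeq (Gfac d L) =
      ((List.range d).map fun t => 2 ^ (t + 1) * (Efun L).headD 0).reverse ++ Efun L := by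
  intro L
  induction L with
  | nil => intro h; exact absurd rfl h
  | cons l L ih =>
    intro _ hlast d
    rw [Gfac_cons, sumSeq_append]
    cases L with
    | nil =>
      have hl : l ≠ 0 := by
        intro h; rw [h] at hlast; exact hlast rfl
      obtain ⟨l', rfl⟩ : ∃ l', l = l' + 1 := ⟨l - 1, by omega⟩
      rw [show sumSeq (Gfac (d + 1) []) = [] from rfl, foldr_addSeq_replicate, addSeq_nil_right]
      rw [xw, List.map_reverse, List.map_map, show 1 + d = d + 1 by omega, rev_range_succ]
      have e0 : Efun [] = [] := rfl
      rw [Efun_cons, e0]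
      simp only [List.headD_nil, mul_zero, add_zero]
      congr 1
      · congr 1
        exact List.map_congr_left fun t _ => by
          simp only [Function.comp_apply, List.headD_cons]; ring
      · norm_num
    | cons l₂ L₂ =>
      have hlast' : (l₂ :: L₂).getLast? ≠ some 0 := by
        rwa [List.getLast?_cons_cons] at hlast
      have IH := ih (by simp) hlast' (d + 1)
      rw [IH]
      rcases Nat.eq_zero_or_pos l with rfl | hl
      · rw [List.replicate_zero, List.foldr_nil]
        rw [rev_range_succ, Efun_cons]
        rw [List.append_assoc, List.singleton_append]
        congr 1
        · congr 1
          exact List.map_congr_left fun t _ => by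
            simp only [Efun_cons, List.headD_cons]; ring
        · congr 1
          simp only [Efun_cons, List.headD_cons]; ring
      · obtain ⟨l', rfl⟩ : ∃ l', l = l' + 1 := ⟨l - 1, by omega⟩
        rw [foldr_addSeq_replicate]
        rw [xw, List.map_reverse, List.map_map, show 1 + d = d + 1 by omega]
        rw [addSeq_append _ _ _ (by simp)]
        rw [zip_rev_maps, rev_range_succ, Efun_cons]
        rw [List.append_assoc, List.singleton_append]
        congr 1
        · congr 1
          exact List.map_congr_left fun t _ => by
            simp only [Function.comp_apply, Efun_cons, List.headD_cons]; ring
        · congr 1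
          simp only [Function.comp_apply, Efun_cons, List.headD_cons]; ring

theorem sumSeq_Gfac_zero (L : List ℕ) (hlast : L.getLast? ≠ some 0) :
    sumSeq (Gfac 0 L) = Efun L := by
  cases L with
  | nil => rfl
  | cons l L =>
    rw [sumSeq_Gfac (l :: L) (by simp) hlast 0]
    rfl

/-- The elements `ξ̄_1, ξ̄_2, …` are algebraically independent over `ZMod 2`:
the monomials `ξ̄_1^{l_1} ξ̄_2^{l_2} ⋯ ξ̄_n^{l_n}`, as `(l_1,…,l_n)` ranges over
all distinct finite sequences of nonnegative integers with `l_n > 0`, are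
linearly independent over `ZMod 2` in `𝓕₂*`. -/
theorem xiMonomial_linearIndependent :
    LinearIndependent (ZMod 2)
      (fun L : {L : List ℕ // L.getLast? ≠ some 0} => xiMonomial L.val) := by
  rw [linearIndependent_iff]
  intro lc hlc
  by_contra hne
  obtain ⟨L₀, hL₀, hmax⟩ := Finset.exists_max_image lc.support
    (fun L : {L : List ℕ // L.getLast? ≠ some 0} => sumSeq (Gfac 0 L.val))
    (Finsupp.support_nonempty_iff.2 hne)
  have hval : ∀ L : {L : List ℕ // L.getLast? ≠ some 0},
      (xiMonomial L.val) (sumSeq (Gfac 0 L₀.val)) =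
        (((msProd (Gfac 0 L.val)).count (sumSeq (Gfac 0 L₀.val)) : ℕ) : ZMod 2) := by
    intro L; rw [xiMonomial_eq, ofMS_apply]
  have hL₀val : (xiMonomial L₀.val) (sumSeq (Gfac 0 L₀.val)) = 1 := by
    rw [hval L₀, msProd_count (fun A hA => Gfac_pos L₀.val 0 A hA), Nat.cast_one]
  have hother : ∀ L ∈ lc.support, L ≠ L₀ →
      (xiMonomial L.val) (sumSeq (Gfac 0 L₀.val)) = 0 := by
    intro L hL hLne
    rw [hval L]
    have hcz : (msProd (Gfac 0 L.val)).count (sumSeq (Gfac 0 L₀.val)) = 0 := by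
      rw [Multiset.count_eq_zero]
      intro hmem
      have hb := (msProd_mem (fun A hA => Gfac_pos L.val 0 A hA) _ hmem).2
      have hm := hmax L hL
      have heq : sumSeq (Gfac 0 L.val) = sumSeq (Gfac 0 L₀.val) := le_antisymm hm hb
      have hvv : L.val = L₀.val := by
        apply Efun_inj
        rw [← sumSeq_Gfac_zero L.val L.prop, ← sumSeq_Gfac_zero L₀.val L₀.prop, heq]
      exact hLne (Subtype.ext hvv)
    rw [hcz, Nat.cast_zero]
  have happ : (Finsupp.linearCombination (ZMod 2)
      (fun L : {L : List ℕ // L.getLast? ≠ some 0} => xiMonomial L.val) lc)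
      (sumSeq (Gfac 0 L₀.val)) = 0 := by rw [hlc]; rfl
  rw [Finsupp.linearCombination_apply, Finsupp.sum_apply, Finsupp.sum] at happ
  rw [Finset.sum_eq_single L₀ (fun b hb hbne => by
      rw [Finsupp.smul_apply, hother b hb hbne, smul_zero])
      (fun h => absurd hL₀ h)] at happ
  rw [Finsupp.smul_apply, hL₀val, smul_eq_mul, mul_one] at happ
  exact (Finsupp.mem_support_iff.1 hL₀) happ
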